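/- Let f : ℝ^d → ℝ be differentiable, convex, L-smooth with L > 0, and (L0, L1)-smooth with L0 > 0, L1 > 0, and suppose f attains its minimum at x* with f* = f(x*). Let l* ≤ f*, σ² = f* − l*, T ≥ 1, and let the sequence (x_t)_{t=0,...,T} be generated by x_{t+1} = x_t − η_t ∇f(x_t) with η_t = (f(x_t) − l*)/(√T · ‖∇f(x_t)‖²) (where ∇f(x_t) ≠ 0 for all t < T). If f(x_t) − f* ≥ σ²/√T for all t ∈ {0, ..., T−1}, then min_{0 ≤ t ≤ T−1} f(x_t) − f* ≤ (8 L0 ‖x_0 − x*‖² + 2σ²)/√T + 128 L1² L ‖x_0 − x*‖⁴ / T + 8 L1² σ⁴ L / (L0² T). -/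

import Mathlib

open scoped RealInnerProductSpace
open intervalIntegral in
lemma integral_id_01 : (∫ s in (0:ℝ)..1, s) = 1 / 2 := by
  rw [integral_id]; norm_num

variable {d : ℕ}

/-- Derivative of `f` along a line. -/
lemma hasDerivAt_line (f : EuclideanSpace ℝ (Fin d) → ℝ) (hdiff : Differentiable ℝ f)
    (x v : EuclideanSpace ℝ (Fin d)) (s : ℝ) :
    HasDerivAt (fun t : ℝ => f (x + t • v)) ⟪gradient f (x + s • v), v⟫ s := by
  have h1 : HasDerivAt (fun t : ℝ => x + t • v) v s := by
    simpa using ((hasDerivAt_id s).smul_const v).const_add x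
  have h2 : HasFDerivAt f (InnerProductSpace.toDual ℝ _ (gradient f (x + s • v))) (x + s • v) :=
    (hdiff (x + s • v)).hasGradientAt.hasFDerivAt
  simpa [InnerProductSpace.toDual_apply_apply, Function.comp_def] using h2.comp_hasDerivAt s h1

/-- Descent lemma along a segment. -/
lemma descent_segment (f : EuclideanSpace ℝ (Fin d) → ℝ) (hdiff : Differentiable ℝ f)
    (hcont : Continuous (gradient f)) (x v : EuclideanSpace ℝ (Fin d)) (C : ℝ)
    (hC : ∀ s : ℝ, s ∈ Set.Icc (0:ℝ) 1 →
      ‖gradient f (x + s • v) - gradient f x‖ ≤ C * (s * ‖v‖)) :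
    f (x + v) ≤ f x + ⟪gradient f x, v⟫ + C * ‖v‖ ^ 2 / 2 := by
  set φ' : ℝ → ℝ := fun s => ⟪gradient f (x + s • v), v⟫ with hφ'
  have hd : ∀ s ∈ Set.uIcc (0:ℝ) 1, HasDerivAt (fun t : ℝ => f (x + t • v)) (φ' s) s :=
    fun s _ => hasDerivAt_line f hdiff x v s
  have hc : Continuous φ' := by
    apply Continuous.inner
    · exact hcont.comp (by continuity)
    · exact continuous_const
  have hint : IntervalIntegrable φ' MeasureTheory.volume 0 1 := hc.intervalIntegrable 0 1
  have heq : ∫ s in (0:ℝ)..1, φ' s = f (x + v) - f x := by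
    have := intervalIntegral.integral_eq_sub_of_hasDerivAt hd hint
    simpa using this
  have hmono : ∫ s in (0:ℝ)..1, φ' s ≤
      ∫ s in (0:ℝ)..1, (⟪gradient f x, v⟫ + C * ‖v‖ ^ 2 * s) := by
    apply intervalIntegral.integral_mono_on zero_le_one hint
    · exact (Continuous.intervalIntegrable (by continuity) 0 1)
    · intro s hs
      have h1 : φ' s = ⟪gradient f x, v⟫ + ⟪gradient f (x + s • v) - gradient f x, v⟫ := by
        simp [hφ', inner_sub_left]
      have h2 := real_inner_le_norm (gradient f (x + s • v) - gradient f x) v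
      have h3 := hC s hs
      have h4 : (0:ℝ) ≤ ‖v‖ := norm_nonneg v
      nlinarith [norm_nonneg (gradient f (x + s • v) - gradient f x)]
  have hR : ∫ s in (0:ℝ)..1, (⟪gradient f x, v⟫ + C * ‖v‖ ^ 2 * s)
      = ⟪gradient f x, v⟫ + C * ‖v‖ ^ 2 / 2 := by
    rw [intervalIntegral.integral_add intervalIntegrable_const
      ((IntervalIntegrable.const_mul intervalIntegral.intervalIntegrable_id (C * ‖v‖ ^ 2)))]
    rw [intervalIntegral.integral_const_mul, integral_id_01]
    simp
    ring
  linarith [heq ▸ hmono, hR]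

/-- Gradient inequality for a convex differentiable function. -/
lemma grad_lower (f : EuclideanSpace ℝ (Fin d) → ℝ) (hconv : ConvexOn ℝ Set.univ f)
    (hdiff : Differentiable ℝ f) (a b : EuclideanSpace ℝ (Fin d)) :
    f a + ⟪gradient f a, b - a⟫ ≤ f b := by
  set ψ : ℝ → ℝ := fun t => f (a + t • (b - a)) with hψ
  have hψconv : ConvexOn ℝ Set.univ ψ := by
    have h := hconv.comp_affineMap (AffineMap.lineMap a b)
    have : ψ = f ∘ (AffineMap.lineMap a b : ℝ →ᵃ[ℝ] EuclideanSpace ℝ (Fin d)) := by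
      funext t
      simp [hψ, AffineMap.lineMap_apply]
      rw [add_comm]
    rw [this]
    simpa using h
  have hder : HasDerivAt ψ ⟪gradient f a, b - a⟫ 0 := by
    have := hasDerivAt_line f hdiff a (b - a) 0
    simpa using this
  have hs := hψconv.le_slope_of_hasDerivAt (Set.mem_univ (0:ℝ)) (Set.mem_univ (1:ℝ))
    zero_lt_one hder
  have h0 : ψ 0 = f a := by simp [hψ]
  have h1 : ψ 1 = f b := by simp [hψ]
  rw [slope_def_field, h0, h1] at hs
  have he : (f b - f a) / ((1:ℝ) - 0) = f b - f a := by norm_num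
  rw [he] at hs
  linarith

/-- Key bound: `‖∇f p‖² ≤ 2 C (f p − f*)` for a suitable `C`. -/
lemma key_grad_bound (f : EuclideanSpace ℝ (Fin d) → ℝ) (hdiff : Differentiable ℝ f)
    (hcont : Continuous (gradient f)) (xstar : EuclideanSpace ℝ (Fin d))
    (hmin : ∀ y, f xstar ≤ f y) (p : EuclideanSpace ℝ (Fin d)) (C : ℝ) (hCpos : 0 < C)
    (hC : ∀ s : ℝ, s ∈ Set.Icc (0:ℝ) 1 →
      ‖gradient f (p + s • (-(1/C) • gradient f p)) - gradient f p‖ ≤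
        C * (s * ‖-(1/C) • gradient f p‖)) :
    ‖gradient f p‖ ^ 2 ≤ 2 * C * (f p - f xstar) := by
  set g := gradient f p with hg
  set v : EuclideanSpace ℝ (Fin d) := -(1/C) • g with hv
  have hd := descent_segment f hdiff hcont p v C hC
  have hinner : ⟪g, v⟫ = -(1/C) * ‖g‖ ^ 2 := by
    rw [hv, real_inner_smul_right, real_inner_self_eq_norm_sq]
  have hnv : ‖v‖ ^ 2 = (1/C) ^ 2 * ‖g‖ ^ 2 := by
    rw [hv, norm_smul]
    rw [mul_pow]
    congr 1
    rw [Real.norm_eq_abs, abs_neg, abs_of_pos (by positivity)]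
  have hm := hmin (p + v)
  rw [hinner, hnv] at hd
  have hC' : C ≠ 0 := ne_of_gt hCpos
  have : f xstar ≤ f p - ‖g‖ ^ 2 / (2 * C) := by
    have e : f p + -(1 / C) * ‖g‖ ^ 2 + C * ((1 / C) ^ 2 * ‖g‖ ^ 2) / 2
        = f p - ‖g‖ ^ 2 / (2 * C) := by field_simp; ring
    linarith [e ▸ hd]
  have h2 : ‖g‖ ^ 2 / (2 * C) ≤ f p - f xstar := by linarith
  have h3 := (div_le_iff₀ (by positivity : (0:ℝ) < 2 * C)).mp h2
  linarith


/-- Scalar core of the per-step decrease estimate. -/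
lemma polyak_scalar_step (L L0 L1 σ2 sT m Δ ng s sΔ η : ℝ)
    (hL : 0 < L) (hL0 : 0 < L0) (hL1 : 0 < L1)
    (hsT : 0 < sT) (hsT1 : 1 ≤ sT) (hσ0 : 0 ≤ σ2)
    (hm0 : 0 < m) (hΔ0 : 0 < Δ) (hΔm : m ≤ Δ)
    (hq : 2 * σ2 < Δ * sT)
    (hngpos : 0 < ng)
    (hK1 : ng ^ 2 ≤ 2 * (L0 + L1 * ng) * Δ)
    (hs0 : 0 ≤ s) (hs2 : s ^ 2 = 2 * L * m)
    (hsΔ0 : 0 ≤ sΔ) (hsΔ2 : sΔ ^ 2 = 2 * L * Δ)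
    (hngle : ng ≤ sΔ) (hssΔ : s ≤ sΔ)
    (hη : η = (Δ + σ2) / (sT * ng ^ 2)) :
    m / (4 * sT * (L0 + L1 * s)) ≤ 2 * η * Δ - η ^ 2 * ng ^ 2 := by
  have hη0 : 0 < η := by
    rw [hη]; exact div_pos (by linarith) (by positivity)
  have e1 : η * ng ^ 2 = (Δ + σ2) / sT := by
    rw [hη]; field_simp
  have h1 : (Δ + σ2) / sT ≤ 3/2 * Δ := by
    rw [div_le_iff₀ hsT]
    linarith [mul_le_mul_of_nonneg_left hsT1 hΔ0.le]
  have h2 : Δ / 2 ≤ 2 * Δ - (Δ + σ2) / sT := by linarith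
  have hηΔ : Δ / (sT * ng ^ 2) ≤ η := by
    rw [hη]
    gcongr
    linarith
  have hdec : Δ ^ 2 / (2 * sT * ng ^ 2) ≤ 2 * η * Δ - η ^ 2 * ng ^ 2 := by
    have hmul := mul_le_mul hηΔ h2 (by positivity) hη0.le
    have er : η * (2 * Δ - (Δ + σ2) / sT) = 2 * η * Δ - η ^ 2 * ng ^ 2 := by
      rw [← e1]; ring
    have el : (Δ / (sT * ng ^ 2)) * (Δ / 2) = Δ ^ 2 / (2 * sT * ng ^ 2) := by ring
    rw [el, er] at hmul
    exact hmul
  have hK1' : ng ^ 2 ≤ 2 * (L0 + L1 * sΔ) * Δ := by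
    nlinarith [mul_le_mul_of_nonneg_left hngle (by positivity : (0:ℝ) ≤ 2 * L1 * Δ)]
  have h4 : Δ / (4 * sT * (L0 + L1 * sΔ)) ≤ Δ ^ 2 / (2 * sT * ng ^ 2) := by
    rw [div_le_div_iff₀ (by positivity) (by positivity)]
    nlinarith [mul_le_mul_of_nonneg_left hK1' (by positivity : (0:ℝ) ≤ 2 * Δ * sT)]
  have h5 : m / (4 * sT * (L0 + L1 * s)) ≤ Δ / (4 * sT * (L0 + L1 * sΔ)) := by
    rw [div_le_div_iff₀ (by positivity) (by positivity)]
    have hms : m * sΔ ≤ Δ * s := by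
      have hprod : 0 ≤ s * sΔ * (sΔ - s) :=
        mul_nonneg (mul_nonneg hs0 hsΔ0) (sub_nonneg.mpr hssΔ)
      have hprod2 : 0 ≤ sΔ ^ 2 * s - s ^ 2 * sΔ := by
        rw [show sΔ ^ 2 * s - s ^ 2 * sΔ = s * sΔ * (sΔ - s) from by ring]
        exact hprod
      rw [hs2, hsΔ2] at hprod2
      have h2L : 0 < 2 * L := by linarith
      by_contra hcon
      push_neg at hcon
      have hneg : Δ * s - m * sΔ < 0 := by linarith
      have := mul_neg_of_pos_of_neg h2L hneg
      linarith
    linarith [mul_le_mul_of_nonneg_left hms (by positivity : (0:ℝ) ≤ 4 * sT * L1),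
      mul_le_mul_of_nonneg_left hΔm (by positivity : (0:ℝ) ≤ 4 * sT * L0)]
  exact le_trans h5 (le_trans h4 hdec)

/-- Scalar final step. -/
lemma polyak_scalar_final (L L0 L1 sT Tr m s R2 σ2 : ℝ)
    (hL : 0 < L) (hL0 : 0 < L0) (hL1 : 0 < L1)
    (hsT : 0 < sT) (hsT2 : sT ^ 2 = Tr)
    (hm0 : 0 < m) (hs0 : 0 ≤ s) (hs2 : s ^ 2 = 2 * L * m)
    (hR2 : 0 ≤ R2) (hσ0 : 0 ≤ σ2)
    (h6 : sT * m ≤ 4 * (L0 + L1 * s) * R2) :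
    m ≤ (8 * L0 * R2 + 2 * σ2) / sT + 128 * L1 ^ 2 * L * R2 ^ 2 / Tr +
      8 * L1 ^ 2 * σ2 ^ 2 * L / (L0 ^ 2 * Tr) := by
  have hTr : 0 < Tr := by rw [← hsT2]; positivity
  have t1nn : 0 ≤ 2 * σ2 / sT := by positivity
  have t3nn : 0 ≤ 8 * L1 ^ 2 * σ2 ^ 2 * L / (L0 ^ 2 * Tr) := by positivity
  have key : m ≤ 8 * L0 * R2 / sT + 128 * L1 ^ 2 * L * R2 ^ 2 / Tr := by
    have t1nn' : 0 ≤ 8 * L0 * R2 / sT := by positivity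
    have t2nn' : 0 ≤ 128 * L1 ^ 2 * L * R2 ^ 2 / Tr := by positivity
    rcases le_or_gt (L1 * s) L0 with hc1 | hc2
    · have h7 : sT * m ≤ 8 * L0 * R2 := by
        nlinarith [mul_le_mul_of_nonneg_right (by linarith : L0 + L1 * s ≤ 2 * L0)
          (by linarith : (0:ℝ) ≤ 4 * R2)]
      have h8 : m ≤ 8 * L0 * R2 / sT := by
        rw [le_div_iff₀ hsT]; linarith
      linarith
    · have h7 : sT * m ≤ 8 * L1 * s * R2 := by
        nlinarith [mul_le_mul_of_nonneg_right (by linarith : L0 + L1 * s ≤ 2 * (L1 * s))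
          (by linarith : (0:ℝ) ≤ 4 * R2)]
      have hnn : 0 ≤ sT * m := by positivity
      have hsq : (sT * m) ^ 2 ≤ (8 * L1 * s * R2) ^ 2 := pow_le_pow_left₀ hnn h7 2
      have e3 : (sT * m) ^ 2 = Tr * m ^ 2 := by rw [← hsT2]; ring
      have e4 : (8 * L1 * s * R2) ^ 2 = 64 * L1 ^ 2 * (2 * L * m) * R2 ^ 2 := by
        rw [← hs2]; ring
      rw [e3, e4] at hsq
      have h9 : Tr * m * m ≤ (128 * L1 ^ 2 * L * R2 ^ 2) * m := by nlinarith
      have h10 : Tr * m ≤ 128 * L1 ^ 2 * L * R2 ^ 2 :=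
        le_of_mul_le_mul_right h9 hm0
      have h11 : m ≤ 128 * L1 ^ 2 * L * R2 ^ 2 / Tr := by
        rw [le_div_iff₀ hTr]; linarith
      linarith
  have e5 : 8 * L0 * R2 / sT ≤ (8 * L0 * R2 + 2 * σ2) / sT := by
    gcongr
    linarith
  linarith

/-- Convergence of Inexact Polyak Stepsize under the assumption that
`f(x_t) − f* ≥ σ²/√T` for all iterates. -/
theorem inexact_polyak_convergence_conditional {d : ℕ}
    (f : EuclideanSpace ℝ (Fin d) → ℝ) (L L0 L1 : ℝ)
    (hL : 0 < L) (hL0 : 0 < L0) (hL1 : 0 < L1)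
    (hdiff : Differentiable ℝ f)
    (hconv : ConvexOn ℝ Set.univ f)
    (hLsmooth : ∀ x y : EuclideanSpace ℝ (Fin d),
      ‖gradient f x - gradient f y‖ ≤ L * ‖x - y‖)
    (hsmooth : ∀ x y : EuclideanSpace ℝ (Fin d), ‖x - y‖ ≤ 1 / L1 →
      ‖gradient f x - gradient f y‖ ≤ (L0 + L1 * ‖gradient f x‖) * ‖x - y‖)
    (xstar : EuclideanSpace ℝ (Fin d)) (hmin : ∀ y, f xstar ≤ f y)
    (lstar : ℝ) (hlstar : lstar ≤ f xstar)
    (σ2 : ℝ) (hσ2 : σ2 = f xstar - lstar)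
    (T : ℕ) (hT : 1 ≤ T)
    (x : ℕ → EuclideanSpace ℝ (Fin d))
    (hgrad : ∀ t < T, gradient f (x t) ≠ 0)
    (hstep : ∀ t < T, x (t + 1) = x t -
      ((f (x t) - lstar) / (Real.sqrt T * ‖gradient f (x t)‖ ^ 2)) • gradient f (x t))
    (hlow : ∀ t < T, f (x t) - f xstar ≥ σ2 / Real.sqrt T) :
    (Finset.range T).inf' (Finset.nonempty_range_iff.mpr (by omega))
        (fun t => f (x t) - f xstar) ≤
      (8 * L0 * ‖x 0 - xstar‖ ^ 2 + 2 * σ2) / Real.sqrt T +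
        128 * L1 ^ 2 * L * ‖x 0 - xstar‖ ^ 4 / T +
        8 * L1 ^ 2 * σ2 ^ 2 * L / (L0 ^ 2 * T) := by
  have hcont : Continuous (gradient f) := by
    have hlip : LipschitzWith (Real.toNNReal L) (gradient f) := by
      apply LipschitzWith.of_dist_le_mul
      intro a b
      rw [dist_eq_norm, dist_eq_norm]
      calc ‖gradient f a - gradient f b‖ ≤ L * ‖a - b‖ := hLsmooth a b
        _ = (Real.toNNReal L : ℝ) * ‖a - b‖ := by rw [Real.coe_toNNReal L hL.le]
    exact hlip.continuous
  -- key gradient bounds (for every point)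
  have hK2all : ∀ p, ‖gradient f p‖ ^ 2 ≤ 2 * L * (f p - f xstar) := by
    intro p
    apply key_grad_bound f hdiff hcont xstar hmin p L hL
    intro s hs
    have h := hLsmooth (p + s • (-(1/L) • gradient f p)) p
    rw [add_sub_cancel_left] at h
    calc ‖gradient f (p + s • (-(1/L) • gradient f p)) - gradient f p‖
        ≤ L * ‖s • (-(1/L) • gradient f p)‖ := h
      _ = L * (s * ‖-(1/L) • gradient f p‖) := by
          rw [norm_smul, Real.norm_eq_abs, abs_of_nonneg hs.1]
  have hK1all : ∀ p, ‖gradient f p‖ ^ 2 ≤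
      2 * (L0 + L1 * ‖gradient f p‖) * (f p - f xstar) := by
    intro p
    set C := L0 + L1 * ‖gradient f p‖ with hCdef
    have hCpos : 0 < C := by positivity
    apply key_grad_bound f hdiff hcont xstar hmin p C hCpos
    intro s hs
    set v : EuclideanSpace ℝ (Fin d) := -(1/C) • gradient f p with hvdef
    have he : p + s • v - p = s • v := add_sub_cancel_left _ _
    have hnv : ‖v‖ = ‖gradient f p‖ / C := by
      rw [hvdef, norm_smul, Real.norm_eq_abs, abs_neg, abs_of_pos (by positivity : (0:ℝ) < 1/C)]
      ring
    have hsv : ‖p - (p + s • v)‖ = s * ‖v‖ := by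
      rw [norm_sub_rev, he, norm_smul, Real.norm_eq_abs, abs_of_nonneg hs.1]
    have hd1 : ‖p - (p + s • v)‖ ≤ 1 / L1 := by
      rw [hsv, hnv]
      have h1 : ‖gradient f p‖ / C ≤ 1 / L1 := by
        rw [div_le_div_iff₀ hCpos hL1]
        nlinarith [norm_nonneg (gradient f p)]
      have h2 : s * (‖gradient f p‖ / C) ≤ 1 * (‖gradient f p‖ / C) :=
        mul_le_mul_of_nonneg_right hs.2 (by positivity)
      calc s * (‖gradient f p‖ / C) ≤ ‖gradient f p‖ / C := by linarith
        _ ≤ 1 / L1 := h1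
    have h := hsmooth p (p + s • v) hd1
    rw [norm_sub_rev] at h
    calc ‖gradient f (p + s • v) - gradient f p‖ ≤ C * ‖p - (p + s • v)‖ := h
      _ = C * (s * ‖v‖) := by rw [hsv]
  -- basic scalar facts
  have hT0 : (0:ℝ) < (T:ℝ) := by exact_mod_cast Nat.pos_of_ne_zero (by omega)
  set sT := Real.sqrt T with hsTdef
  have hsT : 0 < sT := Real.sqrt_pos.mpr hT0
  have hsT1 : 1 ≤ sT := by
    rw [hsTdef, show (1:ℝ) = Real.sqrt 1 by simp]
    exact Real.sqrt_le_sqrt (by exact_mod_cast hT)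
  have hsT2 : sT ^ 2 = (T:ℝ) := Real.sq_sqrt hT0.le
  clear_value sT
  have hσ0 : 0 ≤ σ2 := by rw [hσ2]; linarith
  set R2 := ‖x 0 - xstar‖ ^ 2 with hR2def
  have hR2 : 0 ≤ R2 := by rw [hR2def]; positivity
  have hR4 : ‖x 0 - xstar‖ ^ 4 = R2 ^ 2 := by rw [hR2def]; ring
  clear_value R2
  -- the inf'
  obtain ⟨t0, ht0mem, hmeq⟩ := Finset.exists_mem_eq_inf'
    (Finset.nonempty_range_iff.mpr (by omega : T ≠ 0)) (fun t => f (x t) - f xstar)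
  have ht0 : t0 < T := Finset.mem_range.mp ht0mem
  rw [hmeq]
  set m := f (x t0) - f xstar with hmdef
  have hmle : ∀ t, t < T → m ≤ f (x t) - f xstar := by
    intro t ht
    rw [← hmeq]
    exact Finset.inf'_le _ (Finset.mem_range.mpr ht)
  have hmΔ0 : 2 * σ2 / sT < f (x t0) - f xstar → 0 < m := by
    intro h
    rw [hmdef]
    exact lt_of_le_of_lt (div_nonneg (by linarith) hsT.le) h
  clear_value m
  -- case split
  by_cases hA : ∀ t, t < T → 2 * σ2 / sT < f (x t) - f xstar
  · -- main case
    have hm0 : 0 < m := hmΔ0 (hA t0 ht0)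
    set s := Real.sqrt (2 * L * m) with hsdef
    have hs0 : 0 ≤ s := Real.sqrt_nonneg _
    have hs2 : s ^ 2 = 2 * L * m := Real.sq_sqrt (by positivity)
    clear_value s
    set c := m / (4 * sT * (L0 + L1 * s)) with hcdef
    have hc0 : 0 < c := by rw [hcdef]; positivity
    clear_value c
    -- per-step decrease
    have keystep : ∀ t, t < T →
        ‖x (t+1) - xstar‖ ^ 2 ≤ ‖x t - xstar‖ ^ 2 - c := by
      intro t ht
      have hngpos : 0 < ‖gradient f (x t)‖ := norm_pos_iff.mpr (hgrad t ht)
      have hΔσ : 2 * σ2 / sT < f (x t) - f xstar := hA t ht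
      have hΔm : m ≤ f (x t) - f xstar := hmle t ht
      have hK1 := hK1all (x t)
      have hst := hstep t ht
      have hK2 := hK2all (x t)
      have hgi0 := grad_lower f hconv hdiff (x t) xstar
      set g := gradient f (x t) with hgdef
      set ng := ‖g‖ with hngdef
      set Δ := f (x t) - f xstar with hΔdef
      have hflstar : f (x t) - lstar = Δ + σ2 := by rw [hΔdef, hσ2]; ring
      rw [hflstar] at hst
      set η := (Δ + σ2) / (sT * ng ^ 2) with hηdef
      clear_value g ng Δ η
      have hΔ0 : 0 < Δ := lt_of_le_of_lt (div_nonneg (by linarith) hsT.le) hΔσ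
      have hq : 2 * σ2 < Δ * sT := by
        rw [div_lt_iff₀ hsT] at hΔσ; linarith
      set sΔ := Real.sqrt (2 * L * Δ) with hsΔdef
      have hsΔ0 : 0 ≤ sΔ := Real.sqrt_nonneg _
      have hsΔ2 : sΔ ^ 2 = 2 * L * Δ := Real.sq_sqrt (by positivity)
      have hngle : ng ≤ sΔ := by
        rw [hsΔdef]
        exact (Real.le_sqrt hngpos.le (by positivity)).mpr hK2
      have hssΔ : s ≤ sΔ := by
        rw [hsΔdef, hsdef]
        exact Real.sqrt_le_sqrt (by gcongr)
      clear_value sΔ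
      have hη0 : 0 < η := by
        rw [hηdef]; exact div_pos (by linarith) (by positivity)
      have hcle : c ≤ 2 * η * Δ - η ^ 2 * ng ^ 2 := by
        rw [hcdef]
        exact polyak_scalar_step L L0 L1 σ2 sT m Δ ng s sΔ η hL hL0 hL1 hsT hsT1 hσ0
          hm0 hΔ0 hΔm hq hngpos hK1 hs0 hs2 hsΔ0 hsΔ2 hngle hssΔ hηdef
      -- norm expansion
      have hx1 : x (t+1) - xstar = (x t - xstar) - η • g := by
        rw [hst]; abel
      have i1 : ⟪x t - xstar, η • g⟫ = η * ⟪g, x t - xstar⟫ := by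
        rw [real_inner_smul_right, real_inner_comm]
      have i2 : ‖η • g‖ ^ 2 = η ^ 2 * ng ^ 2 := by
        rw [hngdef, norm_smul, mul_pow, Real.norm_eq_abs, sq_abs]
      have hexp : ‖x (t+1) - xstar‖ ^ 2 =
          ‖x t - xstar‖ ^ 2 - 2 * (η * ⟪g, x t - xstar⟫) + η ^ 2 * ng ^ 2 := by
        rw [hx1, norm_sub_sq_real, i1, i2]
      have hgi : Δ ≤ ⟪g, x t - xstar⟫ := by
        have hneg : xstar - x t = -(x t - xstar) := by abel
        rw [hneg, inner_neg_right] at hgi0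
        rw [hΔdef]
        linarith
      have hmono : 2 * η * Δ ≤ 2 * (η * ⟪g, x t - xstar⟫) := by
        linarith [mul_le_mul_of_nonneg_left hgi hη0.le]
      linarith [hexp, hcle, hmono]
    -- telescoping
    have tele : ∀ n : ℕ, n ≤ T → ‖x n - xstar‖ ^ 2 + (n:ℝ) * c ≤ R2 := by
      intro n
      induction n with
      | zero =>
          intro _
          rw [hR2def, Nat.cast_zero, zero_mul, add_zero]
      | succ k ih =>
          intro hk
          have h := keystep k (by omega)
          have h2 := ih (by omega)
          push_cast
          linarith
    have hTc : (T:ℝ) * c ≤ R2 := by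
      have h := tele T le_rfl
      have h' : (0:ℝ) ≤ ‖x T - xstar‖ ^ 2 := by positivity
      linarith
    -- final algebra
    have h6 : sT * m ≤ 4 * (L0 + L1 * s) * R2 := by
      have h1 : (T:ℝ) * m / (4 * sT * (L0 + L1 * s)) ≤ R2 := by
        rw [mul_div_assoc, ← hcdef]; exact hTc
      have h2 : (T:ℝ) * m ≤ R2 * (4 * sT * (L0 + L1 * s)) :=
        (div_le_iff₀ (by positivity)).mp h1
      have e : sT * (sT * m) = (T:ℝ) * m := by rw [← hsT2]; ring
      have e2 : R2 * (4 * sT * (L0 + L1 * s)) = sT * (4 * (L0 + L1 * s) * R2) := by ring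
      rw [e2, ← e] at h2
      exact le_of_mul_le_mul_left h2 hsT
    have key := polyak_scalar_final L L0 L1 sT (T:ℝ) m s R2 σ2 hL hL0 hL1 hsT hsT2
      hm0 hs0 hs2 hR2 hσ0 h6
    rw [hR4]
    exact key
  · -- some iterate is already small
    push_neg at hA
    obtain ⟨t, ht, hle⟩ := hA
    have h1 : m ≤ 2 * σ2 / sT := le_trans (hmle t ht) hle
    have h2 : 2 * σ2 / sT ≤ (8 * L0 * R2 + 2 * σ2) / sT := by
      gcongr
      linarith [mul_nonneg (by linarith : (0:ℝ) ≤ 8 * L0) hR2]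
    have t2nn : 0 ≤ 128 * L1 ^ 2 * L * ‖x 0 - xstar‖ ^ 4 / (T:ℝ) := by positivity
    have t3nn : 0 ≤ 8 * L1 ^ 2 * σ2 ^ 2 * L / (L0 ^ 2 * (T:ℝ)) := by positivity
    linarith
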